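/- arXiv:2101.00475 — 2 statements merged into one kernel-verified Lean document; each statement's English description precedes it below -/
import Mathlib

section
/- Let (R, m) be a Noetherian local ring of prime characteristic p > 0 with Fte(R) < ∞ (there is a uniform Frobenius test exponent for all parameter ideals). If x_1, …, x_d is a system of parameters of R and t ≤ d, then Fte((x_1, …, x_t)) ≤ Fte(R). Concretely: if e = Fte(R), then for every a ∈ (x_1,…,x_t)^F one has a^{p^e} ∈ (x_1,…,x_t)^{[p^e]}. -/
open Ideal

/-- The `q`-th Frobenius power of an ideal: the ideal generated by `q`-th powers of its elements. -/
def frobPow {R : Type*} [CommRing R] (I : Ideal R) (q : ℕ) : Ideal R :=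
  Ideal.span ((· ^ q) '' (I : Set R))

/-- The Frobenius closure of an ideal, as a set. -/
def frobClosure {R : Type*} [CommRing R] (I : Ideal R) (p : ℕ) : Set R :=
  {x | ∃ e : ℕ, x ^ p ^ e ∈ frobPow I (p ^ e)}

/-- A parameter ideal of a `d`-dimensional Noetherian local ring: an ideal generated by a
system of parameters, i.e. `d` elements of the maximal ideal generating an ideal whose
radical is the maximal ideal. -/
def IsParameterIdeal {R : Type*} [CommRing R] [IsLocalRing R] (d : ℕ) (q : Ideal R) : Prop :=
  ∃ y : Fin d → R, q = Ideal.span (Set.range y) ∧ q ≤ IsLocalRing.maximalIdeal R ∧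
    IsLocalRing.maximalIdeal R ≤ q.radical

lemma frobPow_mono {R : Type*} [CommRing R] {I J : Ideal R} (h : I ≤ J) (q : ℕ) :
    frobPow I q ≤ frobPow J q :=
  Ideal.span_mono (Set.image_mono h)

lemma frobClosure_mono {R : Type*} [CommRing R] {I J : Ideal R} (h : I ≤ J) (p : ℕ) :
    frobClosure I p ⊆ frobClosure J p := by
  rintro a ⟨e, he⟩
  exact ⟨e, frobPow_mono h _ he⟩

lemma frobPow_le_self {R : Type*} [CommRing R] (I : Ideal R) {q : ℕ} (hq : 0 < q) :
    frobPow I q ≤ I := by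
  rw [frobPow, Ideal.span_le]
  rintro _ ⟨a, ha, rfl⟩
  exact I.pow_mem_of_mem ha q hq

lemma frobPow_eq_map {R : Type*} [CommRing R] (p : ℕ) [Fact p.Prime] [CharP R p]
    (I : Ideal R) (e : ℕ) :
    frobPow I (p ^ e) = Ideal.map (iterateFrobenius R p e) I := by
  rw [frobPow, Ideal.map]
  congr 1

lemma frobPow_span {R : Type*} [CommRing R] (p : ℕ) [Fact p.Prime] [CharP R p]
    (S : Set R) (e : ℕ) :
    frobPow (Ideal.span S) (p ^ e) = Ideal.span ((· ^ p ^ e) '' S) := by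
  rw [frobPow_eq_map, Ideal.map_span]
  congr 1

theorem fte_partial_sop {R : Type*} [CommRing R] [IsLocalRing R] [IsNoetherianRing R]
    (p : ℕ) [Fact p.Prime] [CharP R p] (d : ℕ) (hd : ringKrullDim R = d)
    (e : ℕ)
    (hFte : ∀ q : Ideal R, IsParameterIdeal d q →
      frobPow (Ideal.span (frobClosure q p)) (p ^ e) = frobPow q (p ^ e))
    (x : Fin d → R) (hsop : IsParameterIdeal d (Ideal.span (Set.range x)))
    (t : ℕ) (ht : t ≤ d) :
    ∀ a ∈ frobClosure (Ideal.span (x '' {i : Fin d | (i : ℕ) < t})) p,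
      a ^ p ^ e ∈ frobPow (Ideal.span (x '' {i : Fin d | (i : ℕ) < t})) (p ^ e) := by
  intro a ha
  have hp : 0 < p ^ e := pow_pos (Fact.out (p := p.Prime)).pos e
  set m := IsLocalRing.maximalIdeal R with hm
  set It : Ideal R := Ideal.span (x '' {i : Fin d | (i : ℕ) < t}) with hIt
  set I' : Ideal R := frobPow It (p ^ e) with hI'
  obtain ⟨y0, hy0, hle, hrad⟩ := hsop
  -- every x i is in m
  have hxm : ∀ i, x i ∈ m := fun i => hle (Ideal.subset_span ⟨i, rfl⟩)
  have hItm : It ≤ m := by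
    rw [hIt, Ideal.span_le]
    rintro _ ⟨i, _, rfl⟩
    exact hxm i
  have hI'ne : I' ≠ ⊤ := fun h => (IsLocalRing.maximalIdeal.isMaximal R).ne_top
    (top_le_iff.mp (h ▸ (frobPow_le_self It hp).trans hItm))
  -- key step: for each n ≥ 1, a ^ p ^ e ∈ I' + m ^ n
  have key : ∀ n : ℕ, 0 < n → a ^ p ^ e ∈ I' + m ^ n := by
    intro n hn
    set y : Fin d → R := fun i => if (i : ℕ) < t then x i else x i ^ n with hy
    set qn : Ideal R := Ideal.span (Set.range y) with hqn
    have hxq : ∀ i, x i ∈ qn.radical := by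
      intro i
      by_cases h : (i : ℕ) < t
      · exact Ideal.le_radical (Ideal.subset_span ⟨i, by simp [hy, h]⟩)
      · exact ⟨n, Ideal.subset_span ⟨i, by simp [hy, h]⟩⟩
    have hparam : IsParameterIdeal d qn := by
      refine ⟨y, rfl, ?_, ?_⟩
      · rw [hqn, Ideal.span_le]
        rintro _ ⟨i, rfl⟩
        by_cases h : (i : ℕ) < t
        · simp only [hy, h, if_true]
          exact hxm i
        · simp only [hy, h, if_false]
          exact m.pow_mem_of_mem (hxm i) n hn
      · refine hrad.trans (Ideal.radical_le_radical_iff.mpr ?_)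
        rw [Ideal.span_le]
        rintro _ ⟨i, rfl⟩
        exact hxq i
    -- It ≤ qn
    have hItqn : It ≤ qn := by
      rw [hIt, Ideal.span_le]
      rintro _ ⟨i, hi, rfl⟩
      exact Ideal.subset_span ⟨i, by simp [hy, Set.mem_setOf_eq.mp hi]⟩
    have haqn : a ∈ frobClosure qn p := frobClosure_mono hItqn p ha
    have h1 : a ^ p ^ e ∈ frobPow qn (p ^ e) := by
      rw [← hFte qn hparam, frobPow]
      exact Ideal.subset_span ⟨a, Ideal.subset_span haqn, rfl⟩
    -- frobPow qn (p^e) ≤ I' + m ^ n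
    refine (show frobPow qn (p ^ e) ≤ I' + m ^ n from ?_) h1
    rw [hqn, frobPow_span, Ideal.span_le]
    rintro _ ⟨_, ⟨i, rfl⟩, rfl⟩
    by_cases h : (i : ℕ) < t
    · simp only [hy, h, if_true]
      refine Ideal.mem_sup_left ?_
      rw [hI', frobPow]
      exact Ideal.subset_span ⟨x i, Ideal.subset_span ⟨i, h, rfl⟩, rfl⟩
    · simp only [hy, h, if_false]
      refine Ideal.mem_sup_right ?_
      rw [← pow_mul, mul_comm, pow_mul]
      exact Ideal.pow_mem_pow (m.pow_mem_of_mem (hxm i) _ hp) n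
  -- now use Krull's intersection theorem in R ⧸ I'
  have hnt : Nontrivial (R ⧸ I') := Ideal.Quotient.nontrivial_iff.mpr hI'ne
  have hloc : IsLocalRing (R ⧸ I') :=
    IsLocalRing.of_surjective' (Ideal.Quotient.mk I') Ideal.Quotient.mk_surjective
  set mk := Ideal.Quotient.mk I' with hmk
  have hmapne : Ideal.map mk m ≠ ⊤ := by
    intro h
    have : Ideal.comap mk (Ideal.map mk m) = ⊤ := by rw [h, Ideal.comap_top]
    have h2 : (1 : R) ∈ Ideal.comap mk (Ideal.map mk m) := this ▸ Submodule.mem_top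
    rw [Ideal.comap_map_of_surjective mk Ideal.Quotient.mk_surjective, ← RingHom.ker_eq_comap_bot, hmk, Ideal.mk_ker] at h2
    rcases Submodule.mem_sup.mp h2 with ⟨b, hb, c, hc, hbc⟩
    have : (1 : R) ∈ m := hbc ▸ Submodule.add_mem m hb
      (hItm (frobPow_le_self It hp hc))
    exact (IsLocalRing.maximalIdeal.isMaximal R).ne_top (Ideal.eq_top_of_isUnit_mem _ this isUnit_one)
  have hkrull := Ideal.iInf_pow_eq_bot_of_isLocalRing (Ideal.map mk m) hmapne
  have hmem : mk (a ^ p ^ e) ∈ ⨅ i : ℕ, (Ideal.map mk m) ^ i := by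
    rw [Submodule.mem_iInf]
    intro n
    rcases Nat.eq_zero_or_pos n with rfl | hn
    · simp
    · rcases Submodule.mem_sup.mp (key n hn) with ⟨b, hb, c, hc, hbc⟩
      have : mk (a ^ p ^ e) = mk c := by
        rw [← hbc, map_add, Ideal.Quotient.eq_zero_iff_mem.mpr hb, zero_add]
      rw [this, ← Ideal.map_pow]
      exact Ideal.mem_map_of_mem mk hc
  rw [hkrull] at hmem
  exact Ideal.Quotient.eq_zero_iff_mem.mp hmem
end

section
/- Let (R, m) be a Noetherian local ring of prime characteristic p > 0, I an ideal, and a ∈ R. Suppose that for every minimal prime p of R/(I : a) with dim R/p = s (where s = dim R/(I : a) > 0) we have a^{p^h} ∈ I^{[p^h]} R_p for a fixed h ≥ 0. Then dim R/(I^{[p^h]} : a^{p^h}) ≤ s − 1. -/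
open Ideal

/-- A chain of primes all containing `K` gives a lower bound on the dimension of `R ⧸ K`. -/
lemma chain_le_ringKrullDim_quot {R : Type*} [CommRing R] (K : Ideal R)
    (c : LTSeries (PrimeSpectrum R)) (hc : ∀ i, K ≤ (c i).asIdeal) :
    (c.length : WithBot (WithTop ℕ)) ≤ ringKrullDim (R ⧸ K) := by
  have hf : Function.Surjective (Ideal.Quotient.mk K) := Ideal.Quotient.mk_surjective
  have hker : ∀ i, RingHom.ker (Ideal.Quotient.mk K) ≤ (c i).asIdeal := by
    intro i; rw [Ideal.mk_ker]; exact hc i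
  have hprime : ∀ i, ((c i).asIdeal.map (Ideal.Quotient.mk K)).IsPrime := fun i =>
    Ideal.map_isPrime_of_surjective hf (hker i)
  have hcomap : ∀ i, ((c i).asIdeal.map (Ideal.Quotient.mk K)).comap (Ideal.Quotient.mk K)
      = (c i).asIdeal := by
    intro i
    rw [Ideal.comap_map_of_surjective _ hf, ← RingHom.ker_eq_comap_bot, Ideal.mk_ker,
      sup_eq_left.mpr (hc i)]
  let d : LTSeries (PrimeSpectrum (R ⧸ K)) :=
    ⟨c.length, fun i => ⟨(c i).asIdeal.map (Ideal.Quotient.mk K), hprime i⟩, by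
      intro i
      have hlt : (c i.castSucc).asIdeal < (c i.succ).asIdeal := c.step i
      refine lt_of_le_of_ne (Ideal.map_mono hlt.le) ?_
      intro heq
      have := congrArg (Ideal.comap (Ideal.Quotient.mk K)) heq
      simp only [hcomap] at this
      exact hlt.ne this⟩
  exact Order.LTSeries.length_le_krullDim d

theorem dim_colon_frobenius_drop {R : Type*} [CommRing R] [IsLocalRing R] [IsNoetherianRing R]
    (p : ℕ) [Fact p.Prime] [CharP R p] (I : Ideal R) (a : R) (h : ℕ) (s : ℕ) (hs : 0 < s)
    (hdim : ringKrullDim (R ⧸ I.colon (Ideal.span {a})) = s)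
    (hloc : ∀ P ∈ (I.colon (Ideal.span {a})).minimalPrimes, ∀ _ : P.IsPrime,
      ringKrullDim (R ⧸ P) = s →
        algebraMap R (Localization.AtPrime P) (a ^ p ^ h) ∈
          (frobPow I (p ^ h)).map (algebraMap R (Localization.AtPrime P))) :
    ringKrullDim (R ⧸ (frobPow I (p ^ h)).colon (Ideal.span {a ^ p ^ h})) ≤ (s - 1 : ℕ) := by
  set q := p ^ h with hq
  set J := I.colon (Ideal.span {a}) with hJ
  set J' := (frobPow I q).colon (Ideal.span {a ^ q}) with hJ'
  -- every prime containing J' contains J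
  have hJJ' : ∀ (P : Ideal R), P.IsPrime → J' ≤ P → J ≤ P := by
    intro P hP hle x hx
    have hxa : x * a ∈ I := Ideal.mem_colon_span_singleton.mp hx
    have hpow : x ^ q * a ^ q ∈ frobPow I q := by
      rw [← mul_pow]
      exact Ideal.subset_span ⟨x * a, hxa, rfl⟩
    have hxq : x ^ q ∈ J' := Ideal.mem_colon_span_singleton.mpr hpow
    exact hP.mem_of_pow_mem _ (hle hxq)
  -- reduce to a bound on chains
  show Order.krullDim (PrimeSpectrum (R ⧸ J')) ≤ ((s - 1 : ℕ) : WithBot (WithTop ℕ))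
  rw [Order.krullDim]
  apply iSup_le
  intro c
  by_contra hcon
  have hlen : s ≤ c.length := by
    have h1 : ¬ (c.length ≤ s - 1) := fun hh => hcon (by exact (Nat.cast_le (α := WithBot (WithTop ℕ))).mpr hh)
    omega
  -- pull the chain back to R
  have hsurj : Function.Surjective (Ideal.Quotient.mk J') := Ideal.Quotient.mk_surjective
  have hmono : StrictMono (PrimeSpectrum.comap (Ideal.Quotient.mk J')) := by
    intro x y hxy
    refine lt_of_le_of_ne (fun z hz => hxy.le hz) ?_
    intro heq
    exact hxy.ne (PrimeSpectrum.comap_injective_of_surjective _ hsurj heq)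
  let C : LTSeries (PrimeSpectrum R) :=
    c.map (PrimeSpectrum.comap (Ideal.Quotient.mk J')) hmono
  have key : ∀ Q : PrimeSpectrum (R ⧸ J'),
      J' ≤ (PrimeSpectrum.comap (Ideal.Quotient.mk J') Q).asIdeal := by
    intro Q x hx
    show Ideal.Quotient.mk J' x ∈ Q.asIdeal
    rw [Ideal.Quotient.eq_zero_iff_mem.mpr hx]
    exact Q.asIdeal.zero_mem
  have hC : ∀ i, J' ≤ (C i).asIdeal := fun i => key (c i)
  have hCJ : ∀ i, J ≤ (C i).asIdeal := fun i => hJJ' _ (C i).isPrime (hC i)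
  -- the chain has length ≤ s
  have hle_s : C.length ≤ s := by
    by_contra hgt
    push_neg at hgt
    have h1 := chain_le_ringKrullDim_quot J C hCJ
    rw [hdim] at h1
    have : (C.length : WithBot (WithTop ℕ)) ≤ (s : ℕ) := h1
    have : C.length ≤ s := by exact_mod_cast this
    omega
  have hCc : C.length = c.length := rfl
  have hlen' : C.length = s := by omega
  -- the bottom of the chain
  set P₀ := C 0 with hP₀
  have hP₀J : J ≤ P₀.asIdeal := hCJ 0
  have hP₀J' : J' ≤ P₀.asIdeal := hC 0
  have hP₀le : ∀ i, P₀.asIdeal ≤ (C i).asIdeal := fun i => C.monotone (Fin.zero_le i)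
  -- dim R/P₀ = s
  have hdimP₀ : ringKrullDim (R ⧸ P₀.asIdeal) = (s : ℕ) := by
    apply le_antisymm
    · have hfs : Function.Surjective (Ideal.Quotient.factor hP₀J) := by
        intro x
        obtain ⟨y, rfl⟩ := Ideal.Quotient.mk_surjective x
        exact ⟨Ideal.Quotient.mk J y, Ideal.Quotient.factor_mk _ _⟩
      calc ringKrullDim (R ⧸ P₀.asIdeal) ≤ ringKrullDim (R ⧸ J) :=
            ringKrullDim_le_of_surjective _ hfs
        _ = (s : ℕ) := hdim
    · have := chain_le_ringKrullDim_quot P₀.asIdeal C hP₀le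
      rw [hlen'] at this
      exact this
  -- P₀ is a minimal prime of J
  have hmin : P₀.asIdeal ∈ J.minimalPrimes := by
    refine ⟨⟨P₀.isPrime, hP₀J⟩, ?_⟩
    rintro Q ⟨hQp, hQJ⟩ hQle
    by_contra hnle
    have hQlt : Q < P₀.asIdeal := lt_of_le_of_ne hQle (fun heq => hnle heq.ge)
    -- extend the chain by Q below
    have hQlt' : (⟨Q, hQp⟩ : PrimeSpectrum R) < C.head := hQlt
    let D : LTSeries (PrimeSpectrum R) := C.cons ⟨Q, hQp⟩ hQlt'
    have hD : ∀ i, J ≤ (D i).asIdeal := by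
      intro i
      have h0 : (⟨Q, hQp⟩ : PrimeSpectrum R) ≤ D i := by
        have := D.monotone (Fin.zero_le i)
        rwa [show D 0 = (⟨Q, hQp⟩ : PrimeSpectrum R) from
          RelSeries.head_cons C ⟨Q, hQp⟩ hQlt'] at this
      exact hQJ.trans h0
    have h1 := chain_le_ringKrullDim_quot J D hD
    rw [hdim] at h1
    have h2 : D.length = C.length + 1 := by simp [D]
    have : D.length ≤ s := by exact (Nat.cast_le (α := WithBot (WithTop ℕ))).mp h1
    omega
  -- use the localization hypothesis to derive a contradiction
  have hmem := hloc P₀.asIdeal hmin P₀.isPrime hdimP₀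
  rw [IsLocalization.mem_map_algebraMap_iff P₀.asIdeal.primeCompl] at hmem
  obtain ⟨⟨x, u⟩, hx⟩ := hmem
  rw [← _root_.map_mul] at hx
  obtain ⟨cc, hcc⟩ := (IsLocalization.eq_iff_exists P₀.asIdeal.primeCompl _).mp hx
  have hmemF : (cc : R) * u * a ^ q ∈ frobPow I q := by
    have heq : (cc : R) * u * a ^ q = (cc : R) * x := by
      rw [← hcc]; ring
    rw [heq]
    exact (frobPow I q).mul_mem_left _ x.2
  have hmemJ' : (cc : R) * u ∈ J' := Ideal.mem_colon_span_singleton.mpr hmemF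
  have hnotin : (cc : R) * (u : R) ∈ P₀.asIdeal.primeCompl :=
    P₀.asIdeal.primeCompl.mul_mem cc.2 u.2
  exact hnotin (hP₀J' hmemJ')
end
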